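/- Every simple left module over a unital von Neumann regular ring R is isomorphic either to a simple left module over the quotient R/A or to a simple left A-module, where A is any fixed nonzero proper two-sided ideal of R. -/

import Mathlib

/-- Let `R` be a unital von Neumann regular ring and `A` a nonzero
proper two-sided ideal. Then every simple left `R`-module `S` is either
annihilated by `A` (hence is a simple left module over `R/A`), or is simple as
a left `A`-module (every nonzero element generates everything under the `A`-action). -/
theorem stmt9 {R : Type*} [Ring R] (hreg : ∀ a : R, ∃ x : R, a = a * x * a)
    (A : TwoSidedIdeal R) (hA0 : A ≠ ⊥) (hA1 : A ≠ ⊤)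
    (S : Type*) [AddCommGroup S] [Module R S] (hS : IsSimpleModule R S) :
    (∀ a ∈ A, ∀ s : S, a • s = 0) ∨
      (∀ s : S, s ≠ 0 → ∀ t : S, ∃ a ∈ A, a • s = t) := by
  by_cases h : ∀ a ∈ A, ∀ s : S, a • s = 0
  · exact Or.inl h
  · right
    push_neg at h
    obtain ⟨a0, ha0, s0, hs0⟩ := h
    -- The annihilated set is a submodule
    let T : Submodule R S :=
      { carrier := {s | ∀ a ∈ A, a • s = 0}
        zero_mem' := by intro a _; simp
        add_mem' := by
          intro x y hx hy a ha
          rw [smul_add, hx a ha, hy a ha, add_zero]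
        smul_mem' := by
          intro r x hx a ha
          rw [← mul_smul]
          exact hx _ (A.mul_mem_right a r ha) }
    have hT : T = ⊥ := by
      rcases hS.1.2 T with h' | h'
      · exact h'
      · exfalso
        have : s0 ∈ T := h' ▸ Submodule.mem_top
        exact hs0 (this a0 ha0)
    intro s hs t
    -- A • s is a submodule
    let N : Submodule R S :=
      { carrier := {t | ∃ a ∈ A, a • s = t}
        zero_mem' := ⟨0, A.zero_mem, by simp⟩
        add_mem' := by
          rintro x y ⟨a, ha, rfl⟩ ⟨b, hb, rfl⟩
          exact ⟨a + b, A.add_mem ha hb, by rw [add_smul]⟩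
        smul_mem' := by
          rintro r x ⟨a, ha, rfl⟩
          exact ⟨r * a, A.mul_mem_left r a ha, by rw [mul_smul]⟩ }
    have hN : N = ⊤ := by
      rcases hS.1.2 N with h' | h'
      · exfalso
        have hmem : ¬ ∀ a ∈ A, a • s = 0 := by
          intro hall
          have hsT : s ∈ T := hall
          rw [hT] at hsT
          exact hs (by simpa using hsT)
        push_neg at hmem
        obtain ⟨a, ha, hne⟩ := hmem
        have hN' : a • s ∈ N := ⟨a, ha, rfl⟩
        rw [h'] at hN'
        exact hne (by simpa using hN')
      · exact h'
    exact (hN ▸ Submodule.mem_top : t ∈ N)
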